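/- Let a=(a_1,...,a_n) and e=(e_1,...,e_n) be real sequences, and write M(m,k) for the (m,k) entry of M_{e→a}. Then for all 0 ≤ k ≤ m ≤ n with k ≤ n-1, M(m,k) = Σ_{ℓ=0}^{m-k} (-1)^ℓ · h_{m-k-ℓ}(a_1,...,a_{k+1}) · s_ℓ(e_1,...,e_m), where h_ℓ(x_1,...,x_t) denotes the complete homogeneous symmetric polynomial of degree ℓ in x_1,...,x_t and s_ℓ(x_1,...,x_t) denotes the elementary symmetric polynomial of degree ℓ in x_1,...,x_t. -/

import Mathlib

open Polynomial Finset

/-- `IsCOB n a e M` says that `M` is the change-of-basis matrix `M_{e→a}`: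
for each `0 ≤ m ≤ n`, the entry `M m k` is the coefficient of `∏_{i=1}^k (x - a_i)`
in the expansion of `∏_{i=1}^m (x - e_i)` in the basis
`1, (x-a₁), …, ∏_{i=1}^n (x-a_i)`.  (Sequences are 0-indexed: `a i` is `a_{i+1}`.)
Since that basis expansion is unique, this characterizes `M_{e→a}` uniquely. -/
def IsCOB (n : ℕ) (a e : ℕ → ℝ) (M : Matrix (Fin (n+1)) (Fin (n+1)) ℝ) : Prop :=
  ∀ m : Fin (n+1),
    (∏ i ∈ Finset.range (m : ℕ), (X - C (e i))) =
      ∑ k : Fin (n+1), C (M m k) * ∏ i ∈ Finset.range (k : ℕ), (X - C (a i))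

/-- `esymmEval t ℓ x` is the elementary symmetric polynomial `s_ℓ(x_1, …, x_t)`
evaluated at `x_1 = x 0, …, x_t = x (t-1)`. -/
def esymmEval (t ℓ : ℕ) (x : ℕ → ℝ) : ℝ :=
  ∑ S ∈ (Finset.range t).powersetCard ℓ, ∏ i ∈ S, x i

/-- `hsymmEval t ℓ x` is the complete homogeneous symmetric polynomial
`h_ℓ(x_1, …, x_t)` evaluated at `x_1 = x 0, …, x_t = x (t-1)`: the sum over all
multisets of size `ℓ` of variables of the corresponding monomial. -/
def hsymmEval (t ℓ : ℕ) (x : ℕ → ℝ) : ℝ :=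
  ∑ s ∈ (Finset.range t).sym ℓ, (Multiset.map x s.1).prod

lemma esymm_zero (t : ℕ) (x : ℕ → ℝ) : esymmEval t 0 x = 1 := by
  simp [esymmEval]

lemma esymm_eq_zero (t ℓ : ℕ) (h : t < ℓ) (x : ℕ → ℝ) : esymmEval t ℓ x = 0 := by
  rw [esymmEval, Finset.powersetCard_eq_empty.2 (by simpa using h), Finset.sum_empty]

lemma hsymm_zero (t : ℕ) (x : ℕ → ℝ) : hsymmEval t 0 x = 1 := by
  rw [hsymmEval, Finset.sym_zero, Finset.sum_singleton]; rfl

lemma hsymm_zero_var (ℓ : ℕ) (x : ℕ → ℝ) : hsymmEval 0 (ℓ+1) x = 0 := by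
  simp [hsymmEval, Finset.sym_empty]

lemma esymm_rec (t ℓ : ℕ) (x : ℕ → ℝ) :
    esymmEval (t+1) (ℓ+1) x = esymmEval t (ℓ+1) x + x t * esymmEval t ℓ x := by
  unfold esymmEval
  rw [Finset.range_add_one, Finset.powersetCard_succ_insert (by simp), Finset.sum_union, Finset.sum_image]
  · congr 1
    rw [Finset.mul_sum]
    refine Finset.sum_congr rfl fun S hS => ?_
    have ht : t ∉ S := fun h => absurd ((Finset.mem_powersetCard.mp hS).1 h) (by simp)
    rw [Finset.prod_insert ht]
  · intro S hS S' hS' h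
    have ht : t ∉ S := fun h => absurd ((Finset.mem_powersetCard.mp hS).1 h) (by simp)
    have ht' : t ∉ S' := fun h => absurd ((Finset.mem_powersetCard.mp hS').1 h) (by simp)
    rw [← Finset.erase_insert ht, h, Finset.erase_insert ht']
  · rw [Finset.disjoint_left]
    intro S hS hS'
    have ht : t ∉ S := fun h => absurd ((Finset.mem_powersetCard.mp hS).1 h) (by simp)
    obtain ⟨S', hS', rfl⟩ := Finset.mem_image.mp hS'
    exact ht (Finset.mem_insert_self _ _)

lemma hsymm_rec (t ℓ : ℕ) (x : ℕ → ℝ) :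
    hsymmEval (t+1) (ℓ+1) x = hsymmEval t (ℓ+1) x + x t * hsymmEval (t+1) ℓ x := by
  unfold hsymmEval
  rw [← Finset.sum_filter_add_sum_filter_not ((Finset.range (t+1)).sym (ℓ+1)) (fun s => t ∈ s)]
  rw [add_comm]
  congr 1
  · have : Finset.filter (fun s => ¬ t ∈ s) ((Finset.range (t+1)).sym (ℓ+1))
        = (Finset.range t).sym (ℓ+1) := by
      ext s
      simp only [Finset.mem_filter, Finset.mem_sym_iff, Finset.mem_range]
      constructor
      · rintro ⟨h1, h2⟩ i hi
        have h3 := h1 i hi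
        have : i ≠ t := fun h => h2 (h ▸ hi)
        omega
      · intro h
        refine ⟨fun i hi => by have := h i hi; omega, fun ht => by have := h t ht; omega⟩
    rw [this]
  · rw [Finset.mul_sum]
    refine Finset.sum_bij' (fun s hs => s.erase t (Finset.mem_filter.mp hs).2)
      (fun s _ => Sym.cons t s) ?_ ?_ ?_ ?_ ?_
    · intro s hs
      rw [Finset.mem_sym_iff]
      intro i hi
      have hi' : i ∈ s.1.erase t := by
        have := Sym.coe_erase (s := s) (a := t) (Finset.mem_filter.mp hs).2
        rw [← Sym.mem_coe, this] at hi
        exact hi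
      exact (Finset.mem_sym_iff.mp (Finset.mem_filter.mp hs).1) i (Multiset.mem_of_mem_erase hi')
    · intro s hs
      rw [Finset.mem_filter]
      refine ⟨Finset.mem_sym_iff.mpr fun i hi => ?_, Sym.mem_cons_self t s⟩
      rcases Sym.mem_cons.mp hi with h | h
      · simp [h]
      · exact Finset.mem_sym_iff.mp hs i h
    · intro s hs
      exact Sym.cons_erase _
    · intro s hs
      exact Sym.erase_cons_head s t
    · intro s hs
      have ht : t ∈ s.1 := (Finset.mem_filter.mp hs).2
      conv_lhs => rw [← Multiset.cons_erase ht]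
      rw [Multiset.map_cons, Multiset.prod_cons]
      rfl

lemma master (a e : ℕ → ℝ) (k d : ℕ) :
    ∑ ℓ ∈ Finset.range (d+2), (-1:ℝ)^ℓ * hsymmEval (k+1) (d+1-ℓ) a * esymmEval (k+d+1) ℓ e
    = (∑ ℓ ∈ Finset.range (d+2), (-1:ℝ)^ℓ * hsymmEval k (d+1-ℓ) a * esymmEval (k+d) ℓ e)
      + (a k - e (k+d)) *
        ∑ ℓ ∈ Finset.range (d+1), (-1:ℝ)^ℓ * hsymmEval (k+1) (d-ℓ) a * esymmEval (k+d) ℓ e := by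
  set m := k + d with hm
  set A := ∑ ℓ ∈ Finset.range (d+1), (-1:ℝ)^ℓ * hsymmEval (k+1) (d-ℓ) a * esymmEval m (ℓ+1) e with hA
  set Fm := ∑ ℓ ∈ Finset.range (d+1), (-1:ℝ)^ℓ * hsymmEval (k+1) (d-ℓ) a * esymmEval m ℓ e with hFm
  set T := ∑ ℓ ∈ Finset.range (d+2), (-1:ℝ)^ℓ * hsymmEval (k+1) (d+1-ℓ) a * esymmEval m ℓ e with hT
  set U := ∑ ℓ ∈ Finset.range (d+2), (-1:ℝ)^ℓ * hsymmEval k (d+1-ℓ) a * esymmEval m ℓ e with hU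
  have f1 : ∑ ℓ ∈ Finset.range (d+2), (-1:ℝ)^ℓ * hsymmEval (k+1) (d+1-ℓ) a * esymmEval (m+1) ℓ e
      = (-A - e m * Fm) + hsymmEval (k+1) (d+1) a := by
    rw [Finset.sum_range_succ']
    have : ∀ ℓ ∈ Finset.range (d+1),
        (-1:ℝ)^(ℓ+1) * hsymmEval (k+1) (d+1-(ℓ+1)) a * esymmEval (m+1) (ℓ+1) e
        = -((-1:ℝ)^ℓ * hsymmEval (k+1) (d-ℓ) a * esymmEval m (ℓ+1) e)
          + (- (e m * ((-1:ℝ)^ℓ * hsymmEval (k+1) (d-ℓ) a * esymmEval m ℓ e))) := by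
      intro ℓ hℓ
      have hsub : d+1-(ℓ+1) = d - ℓ := by omega
      rw [hsub, esymm_rec m ℓ e, pow_succ]
      ring
    rw [Finset.sum_congr rfl this, Finset.sum_add_distrib, Finset.sum_neg_distrib,
      Finset.sum_neg_distrib, ← Finset.mul_sum, ← hA, ← hFm, esymm_zero]
    simp only [Nat.sub_zero]
    ring
  have f2 : T = -A + hsymmEval (k+1) (d+1) a := by
    rw [hT, Finset.sum_range_succ']
    have : ∀ ℓ ∈ Finset.range (d+1),
        (-1:ℝ)^(ℓ+1) * hsymmEval (k+1) (d+1-(ℓ+1)) a * esymmEval m (ℓ+1) e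
        = -((-1:ℝ)^ℓ * hsymmEval (k+1) (d-ℓ) a * esymmEval m (ℓ+1) e) := by
      intro ℓ hℓ
      have hsub : d+1-(ℓ+1) = d - ℓ := by omega
      rw [hsub, pow_succ]; ring
    rw [Finset.sum_congr rfl this, Finset.sum_neg_distrib, ← hA, esymm_zero]
    simp only [Nat.sub_zero]
    ring
  have f3 : T = U + a k * Fm := by
    rw [hT, hU, Finset.sum_range_succ, Finset.sum_range_succ (n := d+1)
      (f := fun ℓ => (-1:ℝ)^ℓ * hsymmEval k (d+1-ℓ) a * esymmEval m ℓ e)]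
    have : ∀ ℓ ∈ Finset.range (d+1),
        (-1:ℝ)^ℓ * hsymmEval (k+1) (d+1-ℓ) a * esymmEval m ℓ e
        = (-1:ℝ)^ℓ * hsymmEval k (d+1-ℓ) a * esymmEval m ℓ e
          + a k * ((-1:ℝ)^ℓ * hsymmEval (k+1) (d-ℓ) a * esymmEval m ℓ e) := by
      intro ℓ hℓ
      simp only [Finset.mem_range] at hℓ
      have hsub : d+1-ℓ = (d-ℓ)+1 := by omega
      rw [hsub, hsymm_rec]
      ring
    rw [Finset.sum_congr rfl this, Finset.sum_add_distrib]
    have hd1 : d+1-(d+1) = 0 := by omega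
    rw [hd1, hsymm_zero, hsymm_zero, hFm, Finset.mul_sum]
    ring
  calc ∑ ℓ ∈ Finset.range (d+2), (-1:ℝ)^ℓ * hsymmEval (k+1) (d+1-ℓ) a * esymmEval (m+1) ℓ e
      = (-A - e m * Fm) + hsymmEval (k+1) (d+1) a := f1
    _ = T - e m * Fm := by rw [f2]; ring
    _ = U + (a k - e m) * Fm := by rw [f3]; ring

/-- the explicit formula. -/
noncomputable def Fml (a e : ℕ → ℝ) (m k : ℕ) : ℝ :=
  ∑ ℓ ∈ Finset.range (m - k + 1),
    (-1 : ℝ) ^ ℓ * hsymmEval (k + 1) (m - k - ℓ) a * esymmEval m ℓ e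

lemma Fml_self (a e : ℕ → ℝ) (m : ℕ) : Fml a e m m = 1 := by
  simp [Fml, Nat.sub_self, hsymm_zero, esymm_zero]

lemma Fml_rec0 (a e : ℕ → ℝ) (m : ℕ) :
    Fml a e (m+1) 0 = (a 0 - e m) * Fml a e m 0 := by
  have h := master a e 0 m
  simp only [Nat.zero_add, zero_add] at h
  have hU : (∑ ℓ ∈ Finset.range (m+2), (-1:ℝ)^ℓ * hsymmEval 0 (m+1-ℓ) a * esymmEval m ℓ e) = 0 := by
    refine Finset.sum_eq_zero fun ℓ hℓ => ?_
    simp only [Finset.mem_range] at hℓ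
    rcases Nat.lt_or_ge ℓ (m+1) with h1 | h1
    · have : m+1-ℓ = (m-ℓ)+1 := by omega
      rw [this, hsymm_zero_var]; ring
    · have hℓ' : ℓ = m+1 := by omega
      rw [hℓ', esymm_eq_zero m (m+1) (by omega)]; ring
  rw [hU, zero_add] at h
  show (∑ ℓ ∈ Finset.range (m+1-0+1), (-1:ℝ)^ℓ * hsymmEval 1 (m+1-0-ℓ) a * esymmEval (m+1) ℓ e) = _
  simp only [Nat.sub_zero]
  rw [h]
  rfl

lemma Fml_recS (a e : ℕ → ℝ) (k m : ℕ) (h : k + 1 ≤ m) :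
    Fml a e (m+1) (k+1) = Fml a e m k + (a (k+1) - e m) * Fml a e m (k+1) := by
  obtain ⟨d, rfl⟩ : ∃ d, m = (k+1) + d := ⟨m - (k+1), by omega⟩
  have h1 : (k+1)+d+1-(k+1) = d+1 := by omega
  have h2 : (k+1)+d - k = d+1 := by omega
  have h3 : (k+1)+d - (k+1) = d := by omega
  have hmain := master a e (k+1) d
  unfold Fml
  rw [h1, h2, h3]
  convert hmain using 3 <;> omega

/-- Newton basis polynomials -/
noncomputable def Pb (a : ℕ → ℝ) (k : ℕ) : ℝ[X] := ∏ i ∈ Finset.range k, (X - C (a i))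

lemma Pb_monic (a : ℕ → ℝ) (k : ℕ) : (Pb a k).Monic :=
  monic_prod_of_monic _ _ fun i _ => monic_X_sub_C _

lemma Pb_natDegree (a : ℕ → ℝ) (k : ℕ) : (Pb a k).natDegree = k := by
  rw [Pb, natDegree_prod_of_monic _ _ fun i _ => monic_X_sub_C _]
  simp

noncomputable def G (a e : ℕ → ℝ) (m k : ℕ) : ℝ := if k ≤ m then Fml a e m k else 0

lemma cob (n : ℕ) (a e : ℕ → ℝ) : ∀ m, m ≤ n →
    (∏ i ∈ Finset.range m, (X - C (e i))) =
      ∑ k ∈ Finset.range (n+1), C (G a e m k) * Pb a k := by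
  intro m
  induction m with
  | zero =>
    intro _
    rw [Finset.range_zero, Finset.prod_empty]
    rw [Finset.sum_eq_single 0]
    · simp [G, Fml_self, Pb]
    · intro k _ hk
      have : ¬ k ≤ 0 := by omega
      simp [G, this]
    · intro h; exact absurd (Finset.mem_range.mpr (by omega)) h
  | succ m IH =>
    intro hm
    have IH' := IH (by omega)
    rw [Finset.prod_range_succ, IH', Finset.sum_mul]
    have expand : ∀ k ∈ Finset.range (n+1),
        C (G a e m k) * Pb a k * (X - C (e m))
        = C (G a e m k) * Pb a (k+1) + C (G a e m k * (a k - e m)) * Pb a k := by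
      intro k _
      rw [show Pb a (k+1) = Pb a k * (X - C (a k)) from Finset.prod_range_succ _ _, map_mul,
        map_sub]
      ring
    rw [Finset.sum_congr rfl expand, Finset.sum_add_distrib]
    have split : ∀ k ∈ Finset.range (n+1),
        C (G a e (m+1) k) * Pb a k
        = (if k = 0 then 0 else C (G a e m (k-1)) * Pb a k)
          + C (G a e m k * (a k - e m)) * Pb a k := by
      intro k hk
      have G_le : ∀ m k : ℕ, k ≤ m → G a e m k = Fml a e m k := fun m k h => if_pos h
      have G_gt : ∀ m k : ℕ, m < k → G a e m k = 0 := fun m k h => if_neg (by omega)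
      have key : G a e (m+1) k = (if k = 0 then 0 else G a e m (k-1)) + G a e m k * (a k - e m) := by
        rcases Nat.eq_zero_or_pos k with rfl | hpos
        · rw [if_pos rfl, zero_add, G_le (m+1) 0 (by omega), G_le m 0 (by omega), Fml_rec0]
          ring
        · obtain ⟨j, rfl⟩ : ∃ j, k = j + 1 := ⟨k - 1, by omega⟩
          rw [if_neg (by omega), Nat.add_sub_cancel]
          rcases Nat.lt_or_ge m (j+1) with hj | hj
          · rcases Nat.lt_or_ge (m+1) (j+1) with hj2 | hj2
            · rw [G_gt (m+1) (j+1) (by omega), G_gt m j (by omega), G_gt m (j+1) (by omega)]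
              ring
            · have hjm : j = m := by omega
              subst hjm
              rw [G_le (j+1) (j+1) (by omega), G_le j j (by omega), G_gt j (j+1) (by omega),
                Fml_self, Fml_self]
              ring
          · rw [G_le (m+1) (j+1) (by omega), G_le m j (by omega), G_le m (j+1) hj,
              Fml_recS a e j m hj]
            ring
      rw [key, map_add, add_mul]
      congr 1
      split_ifs with h0
      · simp
      · rfl
    rw [Finset.sum_congr rfl split, Finset.sum_add_distrib]
    congr 1
    -- shift sum
    conv_rhs => rw [Finset.sum_range_succ']
    conv_lhs => rw [Finset.sum_range_succ]
    rw [show G a e m n = 0 from if_neg (by omega)]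
    simp only [map_zero, zero_mul, add_zero, if_pos]
    refine Finset.sum_congr rfl fun j hj => ?_
    rw [if_neg (Nat.succ_ne_zero j), Nat.add_sub_cancel]

lemma coeffs_zero (a : ℕ → ℝ) (n : ℕ) (c : ℕ → ℝ)
    (hc : ∑ k ∈ Finset.range (n+1), C (c k) * Pb a k = 0) : ∀ j, j ≤ n → c j = 0 := by
  have key : ∀ t j, j ≤ n → n - j = t → c j = 0 := by
    intro t
    induction t using Nat.strong_induction_on with
    | _ t IHt =>
      intro j hj hjt
      have hij : ∀ i, j < i → i ≤ n → c i = 0 := fun i h1 h2 => IHt (n - i) (by omega) i h2 (rfl)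
      have hco := congrArg (fun p => Polynomial.coeff p j) hc
      simp only [Polynomial.finset_sum_coeff, Polynomial.coeff_zero, Polynomial.coeff_C_mul] at hco
      rw [Finset.sum_eq_single_of_mem j (Finset.mem_range.mpr (by omega))] at hco
      · rwa [show (Pb a j).coeff j = 1 by
          have := (Pb_monic a j).coeff_natDegree
          rwa [Pb_natDegree] at this, mul_one] at hco
      · intro k hk hkj
        simp only [Finset.mem_range] at hk
        rcases Nat.lt_or_ge k j with h1 | h1
        · rw [Polynomial.coeff_eq_zero_of_natDegree_lt (by rw [Pb_natDegree]; omega), mul_zero]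
        · rw [hij k (by omega) (by omega), zero_mul]
  intro j hj
  exact key (n - j) j hj rfl

theorem statement7 (n : ℕ) (a e : ℕ → ℝ)
    (M : Matrix (Fin (n+1)) (Fin (n+1)) ℝ) (hM : IsCOB n a e M)
    (m k : ℕ) (hk : k ≤ m) (hm : m ≤ n) (hk' : k ≤ n - 1) :
    M ⟨m, by omega⟩ ⟨k, by omega⟩ =
      ∑ ℓ ∈ Finset.range (m - k + 1),
        (-1 : ℝ) ^ ℓ * hsymmEval (k + 1) (m - k - ℓ) a * esymmEval m ℓ e := by
  set m' : Fin (n+1) := ⟨m, by omega⟩ with hm'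
  set c : ℕ → ℝ := fun j => if h : j < n+1 then M m' ⟨j, h⟩ else 0 with hc
  have hfin : (∑ j : Fin (n+1), C (M m' j) * ∏ i ∈ Finset.range (j:ℕ), (X - C (a i)))
      = ∑ j ∈ Finset.range (n+1), C (c j) * Pb a j := by
    rw [← Fin.sum_univ_eq_sum_range (fun j => C (c j) * Pb a j) (n+1)]
    refine Finset.sum_congr rfl fun j _ => ?_
    rw [hc]
    simp only [Fin.is_lt, dif_pos, Fin.eta]
    rfl
  have h1 := hM m'
  rw [hfin] at h1
  have h2 := cob n a e m hm
  have h3 : ∑ j ∈ Finset.range (n+1), C (c j - G a e m j) * Pb a j = 0 := by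
    have : (∏ i ∈ Finset.range m, (X - C (e i))) = (∏ i ∈ Finset.range (m':ℕ), (X - C (e i))) := rfl
    rw [this] at h2
    rw [h1] at h2
    calc ∑ j ∈ Finset.range (n+1), C (c j - G a e m j) * Pb a j
        = ∑ j ∈ Finset.range (n+1), (C (c j) * Pb a j - C (G a e m j) * Pb a j) := by
          refine Finset.sum_congr rfl fun j _ => ?_
          rw [map_sub]; ring
      _ = (∑ j ∈ Finset.range (n+1), C (c j) * Pb a j)
          - ∑ j ∈ Finset.range (n+1), C (G a e m j) * Pb a j := Finset.sum_sub_distrib _ _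
      _ = 0 := by rw [← h2]; ring
  have h4 := coeffs_zero a n _ h3 k (by omega)
  have h5 : c k = G a e m k := by linarith [h4]
  have : M m' ⟨k, by omega⟩ = c k := by
    rw [hc]; simp only [dif_pos (show k < n+1 by omega)]
  rw [this, h5, show G a e m k = Fml a e m k from if_pos hk]
  rfl
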